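/- Let n ≥ 3 and let T be a nonempty finite family of arcs (each of length ≥ 3) that is minimal, meaning that no arc of T is a subpath of a different arc of T. Then 3 · q(T) = 2 · n! holds if and only if T consists of exactly one arc, and that arc has length 3. (This is the equality case of the paper's bound q(A) ≤ (2/3) n!: equality holds exactly when the relation ideal is principal, generated by a single path of length 3.) -/
import Mathlib


/-- The denouement of an arc `(h, ℓ)`: the vertex `h + (ℓ - 1)` in `ZMod n`. -/
def arcDen {n : ℕ} (g : ZMod n × ℕ) : ZMod n := g.1 + ((g.2 - 1 : ℕ) : ZMod n)

/-- The interior of an arc `(h, ℓ)`: the set `{h + j : 1 ≤ j ≤ ℓ - 2}` in `ZMod n`. -/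
def arcInt {n : ℕ} (g : ZMod n × ℕ) : Finset (ZMod n) :=
  (Finset.Icc 1 (g.2 - 2)).image (fun j : ℕ => g.1 + (j : ZMod n))

/-- The hood of an arc `(h, ℓ)`: the set `{h + j : 0 ≤ j ≤ ℓ - 1}` in `ZMod n`. -/
def arcHood {n : ℕ} (g : ZMod n × ℕ) : Finset (ZMod n) :=
  (Finset.range g.2).image (fun j : ℕ => g.1 + (j : ZMod n))

/-- A linear order on `ZMod n`, encoded by its ranking equivalence `σ : ZMod n ≃ Fin n`
(`v ≺ w` iff `σ v < σ w`), is admissible for the arc `g` if every interior vertex of `g`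
lies strictly below the hook or strictly below the denouement of `g`. -/
def Admissible {n : ℕ} (σ : ZMod n ≃ Fin n) (g : ZMod n × ℕ) : Prop :=
  ∀ v ∈ arcInt g, σ v < σ g.1 ∨ σ v < σ (arcDen g)

/-- `qCount n T` is the number of linear orders on `ZMod n` (encoded by ranking
equivalences `ZMod n ≃ Fin n`) admissible for every arc of `T`. -/
noncomputable def qCount (n : ℕ) (T : Finset (ZMod n × ℕ)) : ℕ :=
  Nat.card {σ : ZMod n ≃ Fin n // ∀ g ∈ T, Admissible σ g}

/-- `qCountAt n x T` is the number of linear orders on `ZMod n` admissible for every arc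
of `T` and whose greatest element is `x`. -/
noncomputable def qCountAt (n : ℕ) (x : ZMod n) (T : Finset (ZMod n × ℕ)) : ℕ :=
  Nat.card {σ : ZMod n ≃ Fin n //
    (∀ g ∈ T, Admissible σ g) ∧ ∀ v : ZMod n, σ v ≤ σ x}

/-- `delAt x T` is the subfamily of arcs of `T` for which `x` is neither the hook nor
the denouement. -/
def delAt {n : ℕ} (x : ZMod n) (T : Finset (ZMod n × ℕ)) : Finset (ZMod n × ℕ) :=
  T.filter fun g => g.1 ≠ x ∧ arcDen g ≠ x

/-- The arc `g'` is a subpath of the arc `g` if there is `j ≥ 0` with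
`h' = h + j` in `ZMod n` and `j + ℓ' ≤ ℓ`. -/
def Subpath {n : ℕ} (g' g : ZMod n × ℕ) : Prop :=
  ∃ j : ℕ, g'.1 = g.1 + (j : ZMod n) ∧ j + g'.2 ≤ g.2


section QAuxiliary

open Finset

variable {n : ℕ}

lemma QA_total [NeZero n] : Fintype.card (ZMod n ≃ Fin n) = Nat.factorial n := by
  rw [Fintype.card_equiv (Fintype.equivFinOfCardEq (ZMod.card n)), ZMod.card]

lemma QA_castInj [NeZero n] {i j : ℕ} (hi : i < n) (hj : j < n)
    (h : (i : ZMod n) = (j : ZMod n)) : i = j := by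
  have h2 := congrArg ZMod.val h
  rwa [ZMod.val_cast_of_lt hi, ZMod.val_cast_of_lt hj] at h2

lemma QA_swap_mem {S : Finset (ZMod n)} {a b v : ZMod n} (ha : a ∈ S) (hb : b ∈ S)
    (hv : v ∈ S) : Equiv.swap a b v ∈ S := by
  rw [Equiv.swap_apply_def]
  split_ifs <;> assumption

lemma QA_swap_pred [NeZero n] {S : Finset (ZMod n)} {a b : ZMod n} (ha : a ∈ S) (hb : b ∈ S)
    (σ : ZMod n ≃ Fin n) (h : ∀ v ∈ S, σ v ≤ σ a) :
    ∀ v ∈ S, ((Equiv.swap a b).trans σ) v ≤ ((Equiv.swap a b).trans σ) b := by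
  intro v hv
  simp only [Equiv.trans_apply, Equiv.swap_apply_right]
  exact h _ (QA_swap_mem ha hb hv)

noncomputable def QA_fiberEquiv [NeZero n] {S : Finset (ZMod n)} {a b : ZMod n}
    (ha : a ∈ S) (hb : b ∈ S) :
    {σ : ZMod n ≃ Fin n // ∀ v ∈ S, σ v ≤ σ a} ≃ {σ : ZMod n ≃ Fin n // ∀ v ∈ S, σ v ≤ σ b} where
  toFun x := ⟨(Equiv.swap a b).trans x.1, QA_swap_pred ha hb x.1 x.2⟩
  invFun x := ⟨(Equiv.swap a b).trans x.1, by
    have h2 := QA_swap_pred hb ha x.1 x.2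
    rwa [Equiv.swap_comm b a] at h2⟩
  left_inv x := Subtype.ext (by ext v; simp)
  right_inv x := Subtype.ext (by ext v; simp)

lemma QA_sum_cnt [NeZero n] {S : Finset (ZMod n)} (hS : S.Nonempty) :
    ∑ a ∈ S, Nat.card {σ : ZMod n ≃ Fin n // ∀ v ∈ S, σ v ≤ σ a} = Nat.factorial n := by
  classical
  set top : (ZMod n ≃ Fin n) → ZMod n := fun σ => σ.symm ((S.image σ).max' (hS.image σ)) with htop
  have topmem : ∀ σ, top σ ∈ S := by
    intro σ
    have h1 : (S.image σ).max' (hS.image σ) ∈ S.image σ := Finset.max'_mem _ _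
    rcases Finset.mem_image.mp h1 with ⟨a, haS, ha⟩
    have : top σ = a := by rw [htop]; simp only [← ha, Equiv.symm_apply_apply]
    rwa [this]
  have le_top : ∀ σ : ZMod n ≃ Fin n, ∀ v ∈ S, σ v ≤ σ (top σ) := by
    intro σ v hv
    have h1 : σ (top σ) = (S.image σ).max' (hS.image σ) := σ.apply_symm_apply _
    rw [h1]
    exact Finset.le_max' _ _ (Finset.mem_image_of_mem σ hv)
  have top_iff : ∀ σ : ZMod n ≃ Fin n, ∀ a ∈ S, (top σ = a ↔ ∀ v ∈ S, σ v ≤ σ a) := by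
    intro σ a ha
    constructor
    · rintro rfl; exact le_top σ
    · intro h
      exact σ.injective (le_antisymm (h _ (topmem σ)) (le_top σ a ha))
  calc ∑ a ∈ S, Nat.card {σ : ZMod n ≃ Fin n // ∀ v ∈ S, σ v ≤ σ a}
      = ∑ a ∈ S, ((univ : Finset (ZMod n ≃ Fin n)).filter (fun σ => top σ = a)).card := by
        refine Finset.sum_congr rfl (fun a ha => ?_)
        rw [Nat.card_eq_fintype_card, Fintype.card_subtype]
        congr 1
        apply Finset.filter_congr
        intro σ _
        exact (top_iff σ a ha).symm
    _ = (univ : Finset (ZMod n ≃ Fin n)).card :=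
        (Finset.card_eq_sum_card_fiberwise (fun σ _ => topmem σ)).symm
    _ = Nat.factorial n := by rw [Finset.card_univ, QA_total]

lemma QA_N_mul [NeZero n] {S : Finset (ZMod n)} {a : ZMod n} (ha : a ∈ S) :
    S.card * Nat.card {σ : ZMod n ≃ Fin n // ∀ v ∈ S, σ v ≤ σ a} = Nat.factorial n := by
  have hS : S.Nonempty := ⟨a, ha⟩
  have hconst : ∑ b ∈ S, Nat.card {σ : ZMod n ≃ Fin n // ∀ v ∈ S, σ v ≤ σ b}
      = ∑ _b ∈ S, Nat.card {σ : ZMod n ≃ Fin n // ∀ v ∈ S, σ v ≤ σ a} :=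
    Finset.sum_congr rfl (fun b hb => Nat.card_congr (QA_fiberEquiv hb ha))
  rw [← QA_sum_cnt hS, hconst, Finset.sum_const, smul_eq_mul]

lemma QA_N_pair [NeZero n] {S : Finset (ZMod n)} {a b : ZMod n}
    (ha : a ∈ S) (hb : b ∈ S) (hab : a ≠ b) :
    S.card * Nat.card {σ : ZMod n ≃ Fin n // ∀ v ∈ S, σ v ≤ σ a ∨ σ v ≤ σ b}
      = 2 * Nat.factorial n := by
  classical
  have hdisj : Disjoint
      ((univ : Finset (ZMod n ≃ Fin n)).filter (fun σ => ∀ v ∈ S, σ v ≤ σ a))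
      ((univ : Finset (ZMod n ≃ Fin n)).filter (fun σ => ∀ v ∈ S, σ v ≤ σ b)) := by
    rw [Finset.disjoint_left]
    intro σ h1 h2
    simp only [Finset.mem_filter] at h1 h2
    exact hab (σ.injective (le_antisymm (h2.2 a ha) (h1.2 b hb)))
  have hsplit : Nat.card {σ : ZMod n ≃ Fin n // ∀ v ∈ S, σ v ≤ σ a ∨ σ v ≤ σ b}
      = Nat.card {σ : ZMod n ≃ Fin n // ∀ v ∈ S, σ v ≤ σ a}
        + Nat.card {σ : ZMod n ≃ Fin n // ∀ v ∈ S, σ v ≤ σ b} := by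
    rw [Nat.card_eq_fintype_card, Nat.card_eq_fintype_card, Nat.card_eq_fintype_card,
      Fintype.card_subtype, Fintype.card_subtype, Fintype.card_subtype,
      ← Finset.card_union_of_disjoint hdisj, ← Finset.filter_or]
    congr 1
    apply Finset.filter_congr
    intro σ _
    constructor
    · intro h
      rcases le_total (σ a) (σ b) with hle | hle
      · right; intro v hv; rcases h v hv with h' | h'; exacts [h'.trans hle, h']
      · left; intro v hv; rcases h v hv with h' | h'; exacts [h', h'.trans hle]
    · rintro (h | h) v hv
      · exact Or.inl (h v hv)
      · exact Or.inr (h v hv)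
  rw [hsplit, Nat.mul_add, QA_N_mul ha, QA_N_mul hb, two_mul]

lemma QA_mem_hood {g : ZMod n × ℕ} {j : ℕ} (hj : j < g.2) :
    g.1 + (j : ZMod n) ∈ arcHood g :=
  Finset.mem_image_of_mem _ (Finset.mem_range.mpr hj)

lemma QA_mem_int {g : ZMod n × ℕ} {j : ℕ} (h1 : 1 ≤ j) (h2 : j ≤ g.2 - 2) :
    g.1 + (j : ZMod n) ∈ arcInt g :=
  Finset.mem_image_of_mem _ (Finset.mem_Icc.mpr ⟨h1, h2⟩)

lemma QA_hook_mem_hood {g : ZMod n × ℕ} (hg : 0 < g.2) : g.1 ∈ arcHood g := by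
  have := QA_mem_hood (g := g) (j := 0) hg
  simpa using this

lemma QA_den_mem_hood {g : ZMod n × ℕ} (hg : 0 < g.2) : arcDen g ∈ arcHood g := by
  rw [arcDen]
  exact QA_mem_hood (Nat.sub_lt hg one_pos)

lemma QA_hood_card [NeZero n] {g : ZMod n × ℕ} (hln : g.2 ≤ n) :
    (arcHood g).card = g.2 := by
  rw [arcHood, Finset.card_image_of_injOn, Finset.card_range]
  intro i hi j hj hij
  simp only [Finset.coe_range, Set.mem_Iio] at hi hj
  exact QA_castInj (lt_of_lt_of_le hi hln) (lt_of_lt_of_le hj hln) (add_left_cancel hij)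

lemma QA_adm_iff [NeZero n] {g : ZMod n × ℕ} (h3 : 3 ≤ g.2) (hln : g.2 ≤ n)
    (σ : ZMod n ≃ Fin n) :
    Admissible σ g ↔ ∀ v ∈ arcHood g, σ v ≤ σ g.1 ∨ σ v ≤ σ (arcDen g) := by
  constructor
  · intro hadm v hv
    rcases Finset.mem_image.mp hv with ⟨j, hj, rfl⟩
    rw [Finset.mem_range] at hj
    rcases Nat.eq_zero_or_pos j with rfl | hj0
    · left; simp
    rcases eq_or_ne j (g.2 - 1) with rfl | hjd
    · right; rw [arcDen]
    · rcases hadm _ (QA_mem_int hj0 (by omega)) with h | h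
      · exact Or.inl h.le
      · exact Or.inr h.le
  · intro hp v hv
    rcases Finset.mem_image.mp hv with ⟨j, hj, rfl⟩
    rw [Finset.mem_Icc] at hj
    have hjlt : j < g.2 := by omega
    have hne1 : g.1 + (j : ZMod n) ≠ g.1 := by
      intro hc
      have hc2 : g.1 + (j : ZMod n) = g.1 + ((0 : ℕ) : ZMod n) := by
        rw [hc]; simp
      have := QA_castInj (by omega) (by omega) (add_left_cancel hc2)
      omega
    have hne2 : g.1 + (j : ZMod n) ≠ arcDen g := by
      intro hc
      rw [arcDen] at hc
      have := QA_castInj (by omega) (by omega) (add_left_cancel hc)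
      omega
    rcases hp _ (QA_mem_hood hjlt) with h | h
    · exact Or.inl (lt_of_le_of_ne h (fun e => hne1 (σ.injective e)))
    · exact Or.inr (lt_of_le_of_ne h (fun e => hne2 (σ.injective e)))

lemma QA_arcInt_three (h : ZMod n) : arcInt ((h, 3) : ZMod n × ℕ) = {h + 1} := by
  rw [arcInt]
  norm_num

lemma QA_single_count [NeZero n] {g : ZMod n × ℕ} (h3 : 3 ≤ g.2) (hln : g.2 ≤ n) :
    g.2 * Nat.card {σ : ZMod n ≃ Fin n // Admissible σ g} = 2 * Nat.factorial n := by
  have hpos : 0 < n := Nat.pos_of_ne_zero (NeZero.ne n)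
  have hhd : g.1 ≠ arcDen g := by
    rw [arcDen]
    intro hc
    have hc2 : g.1 + ((0 : ℕ) : ZMod n) = g.1 + ((g.2 - 1 : ℕ) : ZMod n) := by
      rw [Nat.cast_zero, add_zero]; exact hc
    have := QA_castInj (by omega) (by omega) (add_left_cancel hc2)
    omega
  have hpair := QA_N_pair (QA_hook_mem_hood (g := g) (by omega))
    (QA_den_mem_hood (g := g) (by omega)) hhd
  rw [QA_hood_card hln] at hpair
  rw [← hpair]
  congr 1
  exact Nat.card_congr (Equiv.subtypeEquivRight (fun σ => QA_adm_iff h3 hln σ))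

lemma QA_cnt_mono [NeZero n] {p q : (ZMod n ≃ Fin n) → Prop} (h : ∀ σ, p σ → q σ) :
    Nat.card {σ // p σ} ≤ Nat.card {σ // q σ} :=
  Nat.card_le_card_of_injective (fun x => ⟨x.1, h _ x.2⟩) (by
    rintro ⟨x, hx⟩ ⟨y, hy⟩ hxy
    simpa [Subtype.ext_iff] using hxy)

lemma QA_cnt_lt [NeZero n] {p q : (ZMod n ≃ Fin n) → Prop} (h : ∀ σ, p σ → q σ)
    (σ0 : ZMod n ≃ Fin n) (hq : q σ0) (hp : ¬ p σ0) :
    Nat.card {σ // p σ} < Nat.card {σ // q σ} := by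
  classical
  rw [Nat.card_eq_fintype_card, Nat.card_eq_fintype_card,
    Fintype.card_subtype, Fintype.card_subtype]
  apply Finset.card_lt_card
  constructor
  · intro σ hσ
    simp only [Finset.mem_filter, Finset.mem_univ, true_and] at hσ ⊢
    exact h σ hσ
  · intro hsub
    have := hsub (Finset.mem_filter.mpr ⟨Finset.mem_univ σ0, hq⟩)
    exact hp (Finset.mem_filter.mp this).2

lemma QA_witness (hn : 3 ≤ n) {h1 h2 : ZMod n} (hne : h1 ≠ h2) :
    ∃ σ0 : ZMod n ≃ Fin n, Admissible σ0 ((h1, 3) : ZMod n × ℕ) ∧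
      ¬ Admissible σ0 ((h2, 3) : ZMod n × ℕ) := by
  haveI : NeZero n := ⟨by omega⟩
  have hne1 : h1 + 1 ≠ h2 + 1 := by
    intro hc; exact hne (add_right_cancel hc)
  let e : ZMod n ≃ Fin n := Fintype.equivFinOfCardEq (ZMod.card n)
  let z : Fin n := ⟨0, by omega⟩
  let t : Fin n := ⟨n - 1, by omega⟩
  have htz : t ≠ z := by
    intro hc
    have hval : n - 1 = 0 := congrArg Fin.val hc
    omega
  let σ1 : ZMod n ≃ Fin n := e.trans (Equiv.swap (e (h1 + 1)) z)
  have hσ1 : σ1 (h1 + 1) = z := by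
    simp only [σ1, Equiv.trans_apply, Equiv.swap_apply_left]
  have hσ1ne : σ1 (h2 + 1) ≠ z := by
    intro hc
    exact hne1 (σ1.injective (hσ1.trans hc.symm))
  let σ0 : ZMod n ≃ Fin n := σ1.trans (Equiv.swap (σ1 (h2 + 1)) t)
  have hσ0a : σ0 (h1 + 1) = z := by
    simp only [σ0, Equiv.trans_apply, hσ1]
    exact Equiv.swap_apply_of_ne_of_ne (fun hc => hσ1ne hc.symm) (fun hc => htz hc.symm)
  have hσ0b : σ0 (h2 + 1) = t := by
    simp only [σ0, Equiv.trans_apply, Equiv.swap_apply_left]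
  have hmax : ∀ a : Fin n, ¬ (t < a) := by
    intro a ha
    rw [Fin.lt_def] at ha
    have := a.isLt
    simp only [t] at ha
    omega
  refine ⟨σ0, ?_, ?_⟩
  · intro v hv
    rw [QA_arcInt_three, Finset.mem_singleton] at hv
    subst hv
    left
    rw [hσ0a]
    have hz : σ0 h1 ≠ z := by
      intro hc
      have h11 : h1 = h1 + 1 := σ0.injective (hc.trans hσ0a.symm)
      have hc2 : h1 + ((0 : ℕ) : ZMod n) = h1 + ((1 : ℕ) : ZMod n) := by
        push_cast
        rw [add_zero]
        exact h11
      have := QA_castInj (by omega) (by omega) (add_left_cancel hc2)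
      omega
    have hle : z ≤ σ0 h1 := by
      rw [Fin.le_def]
      exact Nat.zero_le _
    exact lt_of_le_of_ne hle (Ne.symm hz)
  · intro hadm
    have hv : h2 + 1 ∈ arcInt ((h2, 3) : ZMod n × ℕ) := by
      rw [QA_arcInt_three]
      exact Finset.mem_singleton_self _
    rcases hadm _ hv with hlt | hlt
    · rw [hσ0b] at hlt
      exact hmax _ hlt
    · rw [hσ0b] at hlt
      exact hmax _ hlt

end QAuxiliary

/-- equality case: let `n ≥ 3` and let `T` be a nonempty minimal finite
family of arcs (each of length `≥ 3`, and no arc of `T` a subpath of a different arc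
of `T`). Then `3 ⬝ q(T) = 2 ⬝ n!` iff `T` consists of exactly one arc of length `3`. -/
theorem q_conjecture_equality_case (n : ℕ) (hn : 3 ≤ n)
    (T : Finset (ZMod n × ℕ)) (hT : ∀ g ∈ T, 3 ≤ g.2) (hne : T.Nonempty)
    (hmin : ∀ g ∈ T, ∀ g' ∈ T, g ≠ g' → ¬ Subpath g g') :
    3 * qCount n T = 2 * Nat.factorial n ↔ ∃ h : ZMod n, T = {(h, 3)} := by
  haveI : NeZero n := ⟨by omega⟩
  have hF : 0 < Nat.factorial n := Nat.factorial_pos n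
  constructor
  · intro heq
    by_contra hnot
    by_cases hbig : ∃ g ∈ T, n + 2 ≤ g.2
    · obtain ⟨g, hgT, hg⟩ := hbig
      haveI hempty : IsEmpty {σ : ZMod n ≃ Fin n // ∀ g ∈ T, Admissible σ g} := by
        constructor
        rintro ⟨σ, hσ⟩
        have hadm := hσ g hgT
        have hmemh : g.1 ∈ arcInt g := by
          have hmm : g.1 + ((n : ℕ) : ZMod n) = g.1 := by
            simp [ZMod.natCast_self]
          have := QA_mem_int (g := g) (j := n) (by omega) (by omega)
          rwa [hmm] at this
        have h1 : σ g.1 < σ (arcDen g) := by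
          rcases hadm _ hmemh with h' | h'
          · exact absurd h' (lt_irrefl _)
          · exact h'
        have hcast : ((g.2 - 1 : ℕ) : ZMod n) = (((g.2 - 1) % n : ℕ) : ZMod n) :=
          (ZMod.natCast_mod _ _).symm
        rcases Nat.eq_zero_or_pos ((g.2 - 1) % n) with hr0 | hr1
        · have hden : arcDen g = g.1 := by
            rw [arcDen, hcast, hr0]
            simp
          rw [hden] at h1
          exact absurd h1 (lt_irrefl _)
        · have hmemd : arcDen g ∈ arcInt g := by
            have hrlt : (g.2 - 1) % n < n := Nat.mod_lt _ (by omega)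
            rw [arcDen, hcast]
            exact QA_mem_int hr1 (by omega)
          rcases hadm _ hmemd with h' | h'
          · exact absurd (h1.trans h') (lt_irrefl _)
          · exact absurd h' (lt_irrefl _)
      have hq0 : qCount n T = 0 := by
        rw [qCount]
        exact Nat.card_of_isEmpty
      omega
    · by_cases h4 : ∃ g ∈ T, 4 ≤ g.2
      · obtain ⟨g, hgT, hg4⟩ := h4
        push_neg at hbig
        have hgn1 : g.2 ≤ n + 1 := by have := hbig g hgT; omega
        by_cases hgen : g.2 = n + 1
        · -- length n + 1
          have hne01 : g.1 ≠ g.1 + 1 := by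
            intro hc
            have hc2 : g.1 + ((0 : ℕ) : ZMod n) = g.1 + ((1 : ℕ) : ZMod n) := by
              push_cast
              rw [add_zero]
              exact hc
            have := QA_castInj (n := n) (by omega) (by omega) (add_left_cancel hc2)
            omega
          have haS : g.1 ∈ ({g.1, g.1 + 1} : Finset (ZMod n)) := Finset.mem_insert_self _ _
          have hNm := QA_N_mul (S := {g.1, g.1 + 1}) haS
          rw [Finset.card_insert_of_notMem (by simpa using hne01),
            Finset.card_singleton] at hNm
          have hden : arcDen g = g.1 := by
            rw [arcDen, hgen]
            simp [ZMod.natCast_self]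
          have hmono : qCount n T ≤
              Nat.card {σ : ZMod n ≃ Fin n // ∀ v ∈ ({g.1, g.1 + 1} : Finset (ZMod n)), σ v ≤ σ g.1} := by
            apply QA_cnt_mono
            intro σ hσ v hv
            simp only [Finset.mem_insert, Finset.mem_singleton] at hv
            rcases hv with rfl | rfl
            · exact le_refl _
            · have hint : g.1 + ((1 : ℕ) : ZMod n) ∈ arcInt g :=
                QA_mem_int le_rfl (by omega)
              rw [Nat.cast_one] at hint
              rcases hσ g hgT _ hint with h' | h'
              · exact h'.le
              · rw [hden] at h'
                exact h'.le
          omega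
        · -- 4 ≤ length ≤ n
          have hln : g.2 ≤ n := by omega
          have hsc := QA_single_count (hT g hgT) hln
          have hmono : qCount n T ≤ Nat.card {σ : ZMod n ≃ Fin n // Admissible σ g} :=
            QA_cnt_mono (fun σ hσ => hσ g hgT)
          have h4c : 4 * Nat.card {σ : ZMod n ≃ Fin n // Admissible σ g}
              ≤ 2 * Nat.factorial n := by
            rw [← hsc]
            exact Nat.mul_le_mul_right _ (by omega)
          omega
      · -- all arcs have length 3
        push_neg at h4
        have hall : ∀ g ∈ T, g.2 = 3 := by
          intro g hg
          have := hT g hg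
          have := h4 g hg
          omega
        obtain ⟨g1, hg1⟩ := hne
        by_cases huniq : ∀ g ∈ T, g = g1
        · exact hnot ⟨g1.1, by
            have e1 : g1 = (g1.1, 3) := Prod.ext rfl (hall g1 hg1)
            rw [← e1]
            exact Finset.eq_singleton_iff_unique_mem.mpr ⟨hg1, huniq⟩⟩
        · push_neg at huniq
          obtain ⟨g2, hg2, hg21⟩ := huniq
          have e1 : g1 = (g1.1, 3) := Prod.ext rfl (hall g1 hg1)
          have e2 : g2 = (g2.1, 3) := Prod.ext rfl (hall g2 hg2)
          have hh : g1.1 ≠ g2.1 := by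
            intro hc
            exact hg21 (by rw [e1, e2, hc])
          obtain ⟨σ0, hadm1, hnadm2⟩ := QA_witness hn hh
          have hlt : Nat.card {σ : ZMod n ≃ Fin n // Admissible σ g1 ∧ Admissible σ g2}
              < Nat.card {σ : ZMod n ≃ Fin n // Admissible σ g1} := by
            apply QA_cnt_lt (fun σ h => h.1) σ0
            · rw [e1]; exact hadm1
            · intro hc
              exact hnadm2 (e2 ▸ hc.2)
          have hmono : qCount n T ≤
              Nat.card {σ : ZMod n ≃ Fin n // Admissible σ g1 ∧ Admissible σ g2} :=
            QA_cnt_mono (fun σ hσ => ⟨hσ g1 hg1, hσ g2 hg2⟩)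
          have hsc := QA_single_count (g := g1) (hT g1 hg1) (by rw [hall g1 hg1]; omega)
          rw [hall g1 hg1] at hsc
          omega
  · rintro ⟨h0, rfl⟩
    have hsc := QA_single_count (n := n) (g := ((h0, 3) : ZMod n × ℕ))
      (by norm_num) (by simpa using hn)
    have hq : qCount n {((h0, 3) : ZMod n × ℕ)}
        = Nat.card {σ : ZMod n ≃ Fin n // Admissible σ ((h0, 3) : ZMod n × ℕ)} := by
      rw [qCount]
      exact Nat.card_congr (Equiv.subtypeEquivRight (fun σ => by simp))
    rw [hq]
    simpa using hsc
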